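/- Let (X,d) be an Urysohn metric space, and let a₁,…,a_n, b₁,…,b_n ∈ X satisfy |d(a_i,a_j) − d(b_i,b_j)| ≤ 2ε for all i,j. Then there exist points c₁,…,c_n ∈ X with d(c_i,c_j) = d(b_i,b_j) and d(a_i,c_i) ≤ ε for all i,j. -/

import Mathlib

/-- A metric space of diameter ≤ 1 which realizes every Katětov function on every finite
subset. -/
def IsUrysohnSpace (M : Type*) [MetricSpace M] : Prop :=
  (∀ x y : M, dist x y ≤ 1) ∧
  ∀ (Y : Finset M) (f : M → ℝ),
    (∀ y ∈ Y, f y ∈ Set.Icc (0 : ℝ) 1) →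
    (∀ y ∈ Y, ∀ z ∈ Y, |f y - f z| ≤ dist y z ∧ dist y z ≤ f y + f z) →
    ∃ p : M, ∀ y ∈ Y, dist p y = f y

noncomputable def stmt13u {X : Type*} [MetricSpace X] {n : ℕ}
    (ne : (Finset.univ : Finset (Fin n)).Nonempty)
    (a b : Fin n → X) (ε : ℝ) (j : Fin n) (x : X) : ℝ :=
  ε + Finset.univ.inf' ne (fun m => dist x (a m) + dist (b j) (b m))

noncomputable def stmt13phi {X : Type*} [MetricSpace X] {n : ℕ}
    (ne : (Finset.univ : Finset (Fin n)).Nonempty)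
    (a b : Fin n → X) (ε : ℝ) (j i : Fin n) : ℝ :=
  min 1 (stmt13u ne a b ε j (a i))

section aux
variable {X : Type*} [MetricSpace X] {n : ℕ}
    (ne : (Finset.univ : Finset (Fin n)).Nonempty)
    (a b : Fin n → X) (ε : ℝ)

lemma stmt13u_le (j : Fin n) (x : X) (m : Fin n) :
    stmt13u ne a b ε j x ≤ ε + (dist x (a m) + dist (b j) (b m)) := by
  have := Finset.inf'_le (s := (Finset.univ : Finset (Fin n)))
    (fun m => dist x (a m) + dist (b j) (b m)) (Finset.mem_univ m)
  unfold stmt13u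
  linarith

lemma stmt13u_nonneg (hε : 0 ≤ ε) (j : Fin n) (x : X) : 0 ≤ stmt13u ne a b ε j x := by
  unfold stmt13u
  have : (0:ℝ) ≤ Finset.univ.inf' ne (fun m => dist x (a m) + dist (b j) (b m)) :=
    Finset.le_inf' ne _ (fun m _ => by positivity)
  linarith

lemma stmt13u_lipx (j : Fin n) (x y : X) :
    stmt13u ne a b ε j x ≤ stmt13u ne a b ε j y + dist x y := by
  obtain ⟨m, -, hm⟩ := Finset.exists_mem_eq_inf' ne (fun m => dist y (a m) + dist (b j) (b m))
  have hm' : Finset.univ.inf' ne (fun m => dist y (a m) + dist (b j) (b m))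
      = dist y (a m) + dist (b j) (b m) := hm
  have h1 := stmt13u_le ne a b ε j x m
  have h2 : dist x (a m) ≤ dist x y + dist y (a m) := dist_triangle x y (a m)
  unfold stmt13u at h1 ⊢
  rw [hm']
  linarith

lemma stmt13u_lipj (j j' : Fin n) (x : X) :
    stmt13u ne a b ε j x ≤ stmt13u ne a b ε j' x + dist (b j) (b j') := by
  obtain ⟨m, -, hm⟩ := Finset.exists_mem_eq_inf' ne (fun m => dist x (a m) + dist (b j') (b m))
  have hm' : Finset.univ.inf' ne (fun m => dist x (a m) + dist (b j') (b m))
      = dist x (a m) + dist (b j') (b m) := hm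
  have h1 := stmt13u_le ne a b ε j x m
  have h2 : dist (b j) (b m) ≤ dist (b j) (b j') + dist (b j') (b m) :=
    dist_triangle (b j) (b j') (b m)
  unfold stmt13u at h1 ⊢
  rw [hm']
  linarith

lemma stmt13u_lb (hab : ∀ i j, dist (b i) (b j) - 2*ε ≤ dist (a i) (a j))
    (j i : Fin n) : dist (b j) (b i) - ε ≤ stmt13u ne a b ε j (a i) := by
  unfold stmt13u
  have : dist (b j) (b i) - 2*ε ≤
      Finset.univ.inf' ne (fun m => dist (a i) (a m) + dist (b j) (b m)) := by
    refine Finset.le_inf' ne _ (fun m _ => ?_)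
    show dist (b j) (b i) - 2*ε ≤ dist (a i) (a m) + dist (b j) (b m)
    have h1 := hab i m
    have h2 : dist (b j) (b i) ≤ dist (b j) (b m) + dist (b i) (b m) :=
      dist_triangle_right (b j) (b i) (b m)
    linarith
  linarith

lemma stmt13phi_le_one (j i : Fin n) : stmt13phi ne a b ε j i ≤ 1 := min_le_left _ _

lemma stmt13phi_nonneg (hε : 0 ≤ ε) (j i : Fin n) : 0 ≤ stmt13phi ne a b ε j i :=
  le_min one_pos.le (stmt13u_nonneg ne a b ε hε j _)

lemma stmt13phi_ub (j i : Fin n) : stmt13phi ne a b ε j i ≤ ε + dist (b j) (b i) := by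
  have := stmt13u_le ne a b ε j (a i) i
  simp only [dist_self, zero_add] at this
  exact le_trans (min_le_right _ _) this

lemma stmt13phi_lb (hdiam : ∀ x y : X, dist x y ≤ 1) (hε : 0 ≤ ε)
    (hab : ∀ i j, dist (b i) (b j) - 2*ε ≤ dist (a i) (a j)) (j i : Fin n) :
    dist (b j) (b i) - ε ≤ stmt13phi ne a b ε j i := by
  refine le_min ?_ (stmt13u_lb ne a b ε hab j i)
  have := hdiam (b j) (b i)
  linarith

lemma stmt13phi_lipj (j j' i : Fin n) :
    stmt13phi ne a b ε j i ≤ stmt13phi ne a b ε j' i + dist (b j) (b j') := by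
  unfold stmt13phi
  have h1 := stmt13u_lipj ne a b ε j j' (a i)
  have hd : (0:ℝ) ≤ dist (b j) (b j') := dist_nonneg
  rcases le_total (stmt13u ne a b ε j' (a i)) 1 with hc | hc
  · rw [min_eq_right hc]
    exact le_trans (min_le_right _ _) h1
  · rw [min_eq_left hc]
    have : min 1 (stmt13u ne a b ε j (a i)) ≤ 1 := min_le_left _ _
    linarith

lemma stmt13_sum_phi (hdiam : ∀ x y : X, dist x y ≤ 1) (hε : 0 ≤ ε)
    (hab' : ∀ i j, dist (a i) (a j) ≤ dist (b i) (b j) + 2*ε) (K i i' : Fin n) :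
    dist (a i) (a i') ≤ stmt13phi ne a b ε K i + stmt13phi ne a b ε K i' := by
  have hsum_u : dist (a i) (a i') ≤ stmt13u ne a b ε K (a i) + stmt13u ne a b ε K (a i') := by
    obtain ⟨m, -, hm⟩ := Finset.exists_mem_eq_inf' ne
      (fun m => dist (a i) (a m) + dist (b K) (b m))
    obtain ⟨m', -, hm2⟩ := Finset.exists_mem_eq_inf' ne
      (fun m => dist (a i') (a m) + dist (b K) (b m))
    have hm' : Finset.univ.inf' ne (fun m => dist (a i) (a m) + dist (b K) (b m))
        = dist (a i) (a m) + dist (b K) (b m) := hm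
    have hm2' : Finset.univ.inf' ne (fun m => dist (a i') (a m) + dist (b K) (b m))
        = dist (a i') (a m') + dist (b K) (b m') := hm2
    unfold stmt13u
    rw [hm', hm2']
    have t1 : dist (b m) (b m') ≤ dist (b m) (b K) + dist (b K) (b m') :=
      dist_triangle (b m) (b K) (b m')
    have t1' : dist (b m) (b K) = dist (b K) (b m) := dist_comm _ _
    have t2 := hab' m m'
    have t3 : dist (a i) (a i') ≤ dist (a i) (a m) + dist (a m) (a m') + dist (a m') (a i') :=
      dist_triangle4 (a i) (a m) (a m') (a i')
    have t4 : dist (a m') (a i') = dist (a i') (a m') := dist_comm _ _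
    linarith
  unfold stmt13phi
  rcases le_total (stmt13u ne a b ε K (a i)) 1 with h1 | h1
  · rcases le_total (stmt13u ne a b ε K (a i')) 1 with h2 | h2
    · rw [min_eq_right h1, min_eq_right h2]; exact hsum_u
    · rw [min_eq_right h1, min_eq_left h2]
      have := hdiam (a i) (a i')
      have := stmt13u_nonneg ne a b ε hε K (a i)
      linarith
  · rw [min_eq_left h1]
    have := hdiam (a i) (a i')
    have h0 : (0:ℝ) ≤ min 1 (stmt13u ne a b ε K (a i')) :=
      le_min one_pos.le (stmt13u_nonneg ne a b ε hε K _)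
    linarith

end aux
/-- In an Urysohn space, if `|d(a_i,a_j) − d(b_i,b_j)| ≤ 2ε` for all `i,j`,
then there are points `c_i` with `d(c_i,c_j) = d(b_i,b_j)` and `d(a_i,c_i) ≤ ε`. -/
theorem stmt_13 {X : Type*} [MetricSpace X] (hX : IsUrysohnSpace X)
    {n : ℕ} (a b : Fin n → X) (ε : ℝ) (hε : 0 ≤ ε)
    (h : ∀ i j, |dist (a i) (a j) - dist (b i) (b j)| ≤ 2 * ε) :
    ∃ c : Fin n → X, (∀ i j, dist (c i) (c j) = dist (b i) (b j)) ∧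
      ∀ i, dist (a i) (c i) ≤ ε := by
  classical
  obtain ⟨hdiam, hury⟩ := hX
  rcases Nat.eq_zero_or_pos n with hn | hn
  · subst hn
    exact ⟨b, fun i j => i.elim0, fun i => i.elim0⟩
  have ne : (Finset.univ : Finset (Fin n)).Nonempty := ⟨⟨0, hn⟩, Finset.mem_univ _⟩
  have hab : ∀ i j, dist (b i) (b j) - 2*ε ≤ dist (a i) (a j) := fun i j => by
    have := abs_le.mp (h i j); linarith [this.1]
  have hab' : ∀ i j, dist (a i) (a j) ≤ dist (b i) (b j) + 2*ε := fun i j => by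
    have := abs_le.mp (h i j); linarith [this.2]
  have key : ∀ k : ℕ, k ≤ n → ∃ c : Fin n → X,
      (∀ i j : Fin n, (i:ℕ) < k → (j:ℕ) < k → dist (c i) (c j) = dist (b i) (b j)) ∧
      (∀ i j : Fin n, (j:ℕ) < k → dist (a i) (c j) = stmt13phi ne a b ε j i) := by
    intro k
    induction k with
    | zero =>
      intro _
      exact ⟨b, fun i j hi _ => absurd hi (by omega), fun i j hj => absurd hj (by omega)⟩
    | succ k ih =>
      intro hk1
      obtain ⟨c, hcc, hac⟩ := ih (Nat.le_of_succ_le hk1)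
      have hkn : k < n := hk1
      set K : Fin n := ⟨k, hkn⟩ with hK
      set B : X → ℝ := fun x => Finset.univ.inf' ne
          (fun j => if (j:ℕ) < k then dist (b K) (b j) + dist x (c j) else 1) with hB
      set f : X → ℝ := fun x => min (stmt13u ne a b ε K x) (B x) with hf
      set F : Finset X := Finset.univ.image a ∪
          (Finset.univ.filter (fun j : Fin n => (j:ℕ) < k)).image c with hF
      have hmem : ∀ y ∈ F, (∃ i, a i = y) ∨ (∃ j : Fin n, (j:ℕ) < k ∧ c j = y) := by
        intro y hy
        rw [hF, Finset.mem_union] at hy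
        rcases hy with hy | hy
        · left; simpa using hy
        · right
          simp only [Finset.mem_image, Finset.mem_filter, Finset.mem_univ, true_and] at hy
          obtain ⟨j, hj1, hj2⟩ := hy
          exact ⟨j, hj1, hj2⟩
      have haF : ∀ i : Fin n, a i ∈ F := by
        intro i; rw [hF, Finset.mem_union]; left
        exact Finset.mem_image_of_mem a (Finset.mem_univ i)
      have hcF : ∀ j : Fin n, (j:ℕ) < k → c j ∈ F := by
        intro j hj; rw [hF, Finset.mem_union]; right
        exact Finset.mem_image_of_mem c (by simp [hj])
      have hB_le_one : ∀ x, B x ≤ 1 := by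
        intro x
        have := Finset.inf'_le (s := (Finset.univ : Finset (Fin n)))
          (fun j => if (j:ℕ) < k then dist (b K) (b j) + dist x (c j) else 1)
          (Finset.mem_univ K)
        have hKk : ¬ ((K:ℕ) < k) := by simp [hK]
        rw [hB]
        simp only [if_neg hKk] at this
        exact this
      have hB_nonneg : ∀ x, 0 ≤ B x := by
        intro x
        rw [hB]
        refine Finset.le_inf' ne _ (fun j _ => ?_)
        by_cases hj : (j:ℕ) < k
        · show (0:ℝ) ≤ if (j:ℕ) < k then dist (b K) (b j) + dist x (c j) else 1
          rw [if_pos hj]; positivity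
        · show (0:ℝ) ≤ if (j:ℕ) < k then dist (b K) (b j) + dist x (c j) else 1
          rw [if_neg hj]; norm_num
      have hf_le_one : ∀ x, f x ≤ 1 := fun x => le_trans (min_le_right _ _) (hB_le_one x)
      have hf_nonneg : ∀ x, 0 ≤ f x :=
        fun x => le_min (stmt13u_nonneg ne a b ε hε K x) (hB_nonneg x)
      -- value of f at the points a i
      have hfa : ∀ i, f (a i) = stmt13phi ne a b ε K i := by
        intro i
        refine le_antisymm (le_min (hf_le_one _) (min_le_left _ _)) ?_
        refine le_min (min_le_right _ _) ?_
        rw [hB]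
        refine Finset.le_inf' ne _ (fun j _ => ?_)
        show stmt13phi ne a b ε K i ≤
          if (j:ℕ) < k then dist (b K) (b j) + dist (a i) (c j) else 1
        by_cases hj : (j:ℕ) < k
        · rw [if_pos hj, hac i j hj]
          have := stmt13phi_lipj ne a b ε K j i
          linarith
        · rw [if_neg hj]
          exact stmt13phi_le_one ne a b ε K i
      -- value of f at the points c j, j < k
      have hfc : ∀ j : Fin n, (j:ℕ) < k → f (c j) = dist (b K) (b j) := by
        intro j hj
        refine le_antisymm ?_ ?_
        · have hBj : B (c j) ≤ dist (b K) (b j) := by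
            have := Finset.inf'_le (s := (Finset.univ : Finset (Fin n)))
              (fun j' => if (j':ℕ) < k then dist (b K) (b j') + dist (c j) (c j') else 1)
              (Finset.mem_univ j)
            rw [hB]
            simp only [if_pos hj, dist_self, add_zero] at this
            exact this
          exact le_trans (min_le_right _ _) hBj
        · refine le_min ?_ ?_
          · unfold stmt13u
            have : dist (b K) (b j) - ε ≤
                Finset.univ.inf' ne (fun m => dist (c j) (a m) + dist (b K) (b m)) := by
              refine Finset.le_inf' ne _ (fun m _ => ?_)
              show dist (b K) (b j) - ε ≤ dist (c j) (a m) + dist (b K) (b m)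
              have h1 : dist (c j) (a m) = stmt13phi ne a b ε j m := by
                rw [dist_comm]; exact hac m j hj
              have h2 := stmt13phi_lb ne a b ε hdiam hε hab j m
              have h3 : dist (b K) (b j) ≤ dist (b K) (b m) + dist (b j) (b m) :=
                dist_triangle_right (b K) (b j) (b m)
              linarith
            linarith
          · rw [hB]
            refine Finset.le_inf' ne _ (fun j' _ => ?_)
            show dist (b K) (b j) ≤
              if (j':ℕ) < k then dist (b K) (b j') + dist (c j) (c j') else 1
            by_cases hj' : (j':ℕ) < k
            · rw [if_pos hj', hcc j j' hj hj']
              have : dist (b K) (b j) ≤ dist (b K) (b j') + dist (b j) (b j') := by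
                have := dist_triangle (b K) (b j') (b j)
                have := dist_comm (b j) (b j')
                linarith
              linarith
            · rw [if_neg hj']
              exact hdiam _ _
      -- f is 1-Lipschitz
      have hlip : ∀ x y : X, f x ≤ f y + dist x y := by
        intro x y
        have hA := stmt13u_lipx ne a b ε K x y
        have hBxy : B x ≤ B y + dist x y := by
          obtain ⟨j0, -, hj0⟩ := Finset.exists_mem_eq_inf' ne
            (fun j => if (j:ℕ) < k then dist (b K) (b j) + dist y (c j) else 1)
          have hj0' : Finset.univ.inf' ne
              (fun j => if (j:ℕ) < k then dist (b K) (b j) + dist y (c j) else 1)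
              = if (j0:ℕ) < k then dist (b K) (b j0) + dist y (c j0) else 1 := hj0
          have hx := Finset.inf'_le (s := (Finset.univ : Finset (Fin n)))
            (fun j => if (j:ℕ) < k then dist (b K) (b j) + dist x (c j) else 1)
            (Finset.mem_univ j0)
          have hx' : Finset.univ.inf' ne
              (fun j => if (j:ℕ) < k then dist (b K) (b j) + dist x (c j) else 1)
              ≤ if (j0:ℕ) < k then dist (b K) (b j0) + dist x (c j0) else 1 := hx
          show (Finset.univ.inf' ne
              fun j => if (j:ℕ) < k then dist (b K) (b j) + dist x (c j) else 1) ≤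
            (Finset.univ.inf' ne
              fun j => if (j:ℕ) < k then dist (b K) (b j) + dist y (c j) else 1) + dist x y
          rw [hj0']
          by_cases hj : (j0:ℕ) < k
          · rw [if_pos hj] at hx' ⊢
            have : dist x (c j0) ≤ dist x y + dist y (c j0) := dist_triangle x y (c j0)
            linarith
          · rw [if_neg hj] at hx' ⊢
            have : (0:ℝ) ≤ dist x y := dist_nonneg
            linarith
        have hd : (0:ℝ) ≤ dist x y := dist_nonneg
        rw [hf]
        show min (stmt13u ne a b ε K x) (B x) ≤
          min (stmt13u ne a b ε K y) (B y) + dist x y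
        rcases le_total (stmt13u ne a b ε K y) (B y) with hc' | hc'
        · rw [min_eq_left hc']
          exact le_trans (min_le_left _ _) hA
        · rw [min_eq_right hc']
          exact le_trans (min_le_right _ _) hBxy
      -- the Katetov sum condition on F
      have hsum : ∀ y ∈ F, ∀ z ∈ F, dist y z ≤ f y + f z := by
        intro y hy z hz
        rcases hmem y hy with ⟨i, rfl⟩ | ⟨j, hj, rfl⟩ <;>
          rcases hmem z hz with ⟨i', rfl⟩ | ⟨j', hj', rfl⟩
        · rw [hfa, hfa]
          exact stmt13_sum_phi ne a b ε hdiam hε hab' K i i'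
        · rw [hfa, hfc j' hj', hac i j' hj']
          have := stmt13phi_lipj ne a b ε j' K i
          have hd : dist (b j') (b K) = dist (b K) (b j') := dist_comm _ _
          linarith
        · rw [hfc j hj, hfa, dist_comm (c j) (a i'), hac i' j hj]
          have := stmt13phi_lipj ne a b ε j K i'
          have hd : dist (b j) (b K) = dist (b K) (b j) := dist_comm _ _
          linarith
        · rw [hfc j hj, hfc j' hj', hcc j j' hj hj']
          have h1 : dist (b j) (b j') ≤ dist (b j) (b K) + dist (b K) (b j') :=
            dist_triangle _ _ _
          have hd : dist (b j) (b K) = dist (b K) (b j) := dist_comm _ _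
          linarith
      obtain ⟨p, hp⟩ := hury F f
        (fun y _ => ⟨hf_nonneg y, hf_le_one y⟩)
        (fun y hy z hz => by
          refine ⟨abs_sub_le_iff.mpr ⟨?_, ?_⟩, hsum y hy z hz⟩
          · have := hlip y z; linarith
          · have := hlip z y; rw [dist_comm z y] at this; linarith)
      refine ⟨fun j => if (j:ℕ) < k then c j else p, ?_, ?_⟩
      · intro i j hi hj
        by_cases hik : (i:ℕ) < k <;> by_cases hjk : (j:ℕ) < k
        · simp only [if_pos hik, if_pos hjk]; exact hcc i j hik hjk
        · have hjK : j = K := Fin.ext (show (j:ℕ) = k by omega)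
          simp only [if_pos hik, if_neg hjk]
          rw [dist_comm, hp (c i) (hcF i hik), hfc i hik, hjK]
          exact dist_comm (b K) (b i)
        · have hiK : i = K := Fin.ext (show (i:ℕ) = k by omega)
          simp only [if_neg hik, if_pos hjk]
          rw [hp (c j) (hcF j hjk), hfc j hjk, hiK]
        · have hiK : i = K := Fin.ext (show (i:ℕ) = k by omega)
          have hjK : j = K := Fin.ext (show (j:ℕ) = k by omega)
          simp only [if_neg hik, if_neg hjk]
          rw [hiK, hjK, dist_self, dist_self]
      · intro i j hj
        by_cases hjk : (j:ℕ) < k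
        · simp only [if_pos hjk]; exact hac i j hjk
        · have hjK : j = K := Fin.ext (show (j:ℕ) = k by omega)
          simp only [if_neg hjk]
          rw [dist_comm, hp (a i) (haF i), hfa i, hjK]
  obtain ⟨c, hcc, hac⟩ := key n le_rfl
  refine ⟨c, fun i j => hcc i j i.2 j.2, fun i => ?_⟩
  rw [hac i i i.2]
  have h1 := stmt13phi_ub ne a b ε i i
  simp only [dist_self, add_zero] at h1
  exact h1
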